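/- Let U, V, W₁, W₂, Y₁, Y₂ be random variables on a common probability space taking values in finite sets, satisfying the seven equalities: I(U;Y₁|W₁) = I(U;Y₁|(V,W₁)); I(V;Y₂|W₂) = I(V;Y₂|(U,W₂)); I(U;V|(W₁,W₂,Y₁)) = I(U;V|(W₁,W₂,Y₂)); I(W₂;Y₁|W₁) = I(W₁;Y₂|W₂); I(W₂;Y₁|(U,W₁)) = I(W₁;Y₂|(U,W₂)); I(W₂;Y₁|(V,W₁)) = I(W₁;Y₂|(V,W₂)); and I(W₂;Y₁|(U,V,W₁)) = I(W₁;Y₂|(U,V,W₂)). Set W = (W₁,W₂). Then for any real numbers R₁, R₂ with R₁ ≤ I(U;Y₁|W₁) and R₂ ≤ I(V;Y₂|W₂), the following hold: R₁ ≤ I((U,W);Y₁); R₂ ≤ I((V,W);Y₂); R₁ + R₂ ≤ min{I(W;Y₁), I(W;Y₂)} + I(U;Y₁|W) + I(V;Y₂|(U,W)); and R₁ + R₂ ≤ min{I(W;Y₁), I(W;Y₂)} + I(U;Y₁|(V,W)) + I(V;Y₂|W). -/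

import Mathlib

open MeasureTheory Real

/-- Shannon entropy (in nats) of a random variable taking values in a finite set. -/
noncomputable def entropy {Ω : Type*} [MeasurableSpace Ω] (μ : Measure Ω)
    {S : Type*} [Fintype S] (X : Ω → S) : ℝ :=
  ∑ x : S, Real.negMulLog (μ (X ⁻¹' {x})).toReal

/-- Mutual information `I(X;Y) = H(X) + H(Y) - H(X,Y)`. -/
noncomputable def mutualInfo {Ω : Type*} [MeasurableSpace Ω] (μ : Measure Ω)
    {S T : Type*} [Fintype S] [Fintype T] (X : Ω → S) (Y : Ω → T) : ℝ :=
  entropy μ X + entropy μ Y - entropy μ (fun ω => (X ω, Y ω))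

/-- Conditional mutual information `I(X;Y|Z) = H(X,Z) + H(Y,Z) - H(X,Y,Z) - H(Z)`. -/
noncomputable def condMutualInfo {Ω : Type*} [MeasurableSpace Ω] (μ : Measure Ω)
    {S T R : Type*} [Fintype S] [Fintype T] [Fintype R]
    (X : Ω → S) (Y : Ω → T) (Z : Ω → R) : ℝ :=
  entropy μ (fun ω => (X ω, Z ω)) + entropy μ (fun ω => (Y ω, Z ω))
    - entropy μ (fun ω => (X ω, Y ω, Z ω)) - entropy μ Z


section Aux

lemma entropy_comp {Ω : Type*} [MeasurableSpace Ω] (μ : Measure Ω)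
    {S T : Type*} [Fintype S] [Fintype T] (X : Ω → S) (f : S → T)
    (hf : Function.Injective f) :
    entropy μ (fun ω => f (X ω)) = entropy μ X := by
  classical
  unfold entropy
  have hzero : ∀ t ∈ Finset.univ, t ∉ Finset.univ.image f →
      Real.negMulLog (μ ((fun ω => f (X ω)) ⁻¹' {t})).toReal = 0 := by
    intro t _ ht
    have he : ((fun ω => f (X ω)) ⁻¹' {t}) = ∅ := by
      ext ω
      simp only [Set.mem_preimage, Set.mem_singleton_iff, Set.mem_empty_iff_false, iff_false]
      intro h
      exact ht (Finset.mem_image.mpr ⟨X ω, Finset.mem_univ _, h⟩)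
    simp [he]
  rw [← Finset.sum_subset (Finset.subset_univ _) hzero,
    Finset.sum_image (fun a _ b _ h => hf h)]
  refine Finset.sum_congr rfl fun s _ => ?_
  congr 1
  have : ((fun ω => f (X ω)) ⁻¹' {f s}) = X ⁻¹' {s} := by
    ext ω; simp [hf.eq_iff]
  rw [this]

lemma meas_fiber_sum {Ω : Type*} [MeasurableSpace Ω] (μ : Measure Ω) [IsFiniteMeasure μ]
    {S : Type*} [Fintype S] [MeasurableSpace S] [MeasurableSingletonClass S]
    (X : Ω → S) (hX : Measurable X) (s : Set Ω) :
    (μ s).toReal = ∑ x : S, (μ (s ∩ X ⁻¹' {x})).toReal := by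
  classical
  have h := sum_measure_preimage_singleton (μ := μ.restrict s) (Finset.univ : Finset S)
    (f := X) (fun b _ => hX (measurableSet_singleton b))
  have h2 : ∀ x : S, μ.restrict s (X ⁻¹' {x}) = μ (s ∩ X ⁻¹' {x}) := by
    intro x
    rw [Measure.restrict_apply (hX (measurableSet_singleton x)), Set.inter_comm]
  have h3 : (X ⁻¹' ↑(Finset.univ : Finset S)) = Set.univ := by simp
  rw [h3] at h
  have h4 : μ.restrict s Set.univ = μ s := by simp
  rw [h4] at h
  rw [← h, ENNReal.toReal_sum (fun a _ => measure_ne_top _ _)]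
  exact Finset.sum_congr rfl fun x _ => by rw [h2 x]

lemma key_ineq {q a b r : ℝ} (hq : 0 ≤ q) (hqa : q ≤ a) (hqb : q ≤ b) (hqr : q ≤ r) :
    q - a * b / r ≤ -(q * Real.log a) - q * Real.log b + q * Real.log q + q * Real.log r := by
  rcases eq_or_lt_of_le hq with h0 | h0
  · have ha : 0 ≤ a := le_trans hq hqa
    have hb : 0 ≤ b := le_trans hq hqb
    have hr : 0 ≤ r := le_trans hq hqr
    rw [← h0]
    simp only [zero_sub, zero_mul, neg_zero, add_zero, sub_zero, zero_add]
    have : 0 ≤ a * b / r := div_nonneg (mul_nonneg ha hb) hr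
    linarith
  · have ha : 0 < a := lt_of_lt_of_le h0 hqa
    have hb : 0 < b := lt_of_lt_of_le h0 hqb
    have hr : 0 < r := lt_of_lt_of_le h0 hqr
    have hlog := Real.log_le_sub_one_of_pos (x := a * b / (q * r)) (by positivity)
    rw [Real.log_div (by positivity) (by positivity), Real.log_mul ha.ne' hb.ne',
      Real.log_mul h0.ne' hr.ne'] at hlog
    have hqq : q * (a * b / (q * r) - 1) = a * b / r - q := by
      field_simp
    have h1 : q * (Real.log a + Real.log b - (Real.log q + Real.log r)) ≤ a * b / r - q := by
      calc q * (Real.log a + Real.log b - (Real.log q + Real.log r))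
          ≤ q * (a * b / (q * r) - 1) := by
            exact mul_le_mul_of_nonneg_left hlog h0.le
        _ = a * b / r - q := hqq
    have expand : q * (Real.log a + Real.log b - (Real.log q + Real.log r))
        = q * Real.log a + q * Real.log b - q * Real.log q - q * Real.log r := by ring
    linarith

lemma condMutualInfo_nonneg {Ω : Type*} [MeasurableSpace Ω] (μ : Measure Ω)
    [IsProbabilityMeasure μ]
    {S T R : Type*} [Fintype S] [MeasurableSpace S] [MeasurableSingletonClass S]
    [Fintype T] [MeasurableSpace T] [MeasurableSingletonClass T]
    [Fintype R] [MeasurableSpace R] [MeasurableSingletonClass R]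
    (X : Ω → S) (Y : Ω → T) (Z : Ω → R)
    (hX : Measurable X) (hY : Measurable Y) :
    0 ≤ condMutualInfo μ X Y Z := by
  classical
  set q : S → T → R → ℝ :=
    fun x y z => (μ (X ⁻¹' {x} ∩ Y ⁻¹' {y} ∩ Z ⁻¹' {z})).toReal with hq_def
  set a : S → R → ℝ := fun x z => ∑ y, q x y z with ha_def
  set b : T → R → ℝ := fun y z => ∑ x, q x y z with hb_def
  set r : R → ℝ := fun z => ∑ x, ∑ y, q x y z with hr_def
  have hq0 : ∀ x y z, 0 ≤ q x y z := fun x y z => ENNReal.toReal_nonneg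
  have PXYZ : ∀ x y z, ((fun ω => (X ω, Y ω, Z ω)) ⁻¹' {(x, y, z)})
      = X ⁻¹' {x} ∩ Y ⁻¹' {y} ∩ Z ⁻¹' {z} := by
    intro x y z; ext ω
    simp [Set.mem_inter_iff, Prod.ext_iff, and_assoc]
  have PXZ : ∀ x z, ((fun ω => (X ω, Z ω)) ⁻¹' {(x, z)}) = X ⁻¹' {x} ∩ Z ⁻¹' {z} := by
    intro x z; ext ω; simp [Set.mem_inter_iff, Prod.ext_iff]
  have PYZ : ∀ y z, ((fun ω => (Y ω, Z ω)) ⁻¹' {(y, z)}) = Y ⁻¹' {y} ∩ Z ⁻¹' {z} := by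
    intro y z; ext ω; simp [Set.mem_inter_iff, Prod.ext_iff]
  have ha : ∀ x z, (μ ((fun ω => (X ω, Z ω)) ⁻¹' {(x, z)})).toReal = a x z := by
    intro x z
    rw [PXZ, meas_fiber_sum μ Y hY]
    refine Finset.sum_congr rfl fun y _ => ?_
    congr 2
    ext ω; simp [Set.mem_inter_iff]; tauto
  have hb : ∀ y z, (μ ((fun ω => (Y ω, Z ω)) ⁻¹' {(y, z)})).toReal = b y z := by
    intro y z
    rw [PYZ, meas_fiber_sum μ X hX]
    refine Finset.sum_congr rfl fun x _ => ?_
    congr 2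
    ext ω; simp [Set.mem_inter_iff]; tauto
  have hr : ∀ z, (μ (Z ⁻¹' {z})).toReal = r z := by
    intro z
    rw [meas_fiber_sum μ X hX]
    refine Finset.sum_congr rfl fun x _ => ?_
    rw [meas_fiber_sum μ Y hY]
    refine Finset.sum_congr rfl fun y _ => ?_
    congr 2
    ext ω; simp [Set.mem_inter_iff]; tauto
  have HXYZ : entropy μ (fun ω => (X ω, Y ω, Z ω))
      = ∑ x, ∑ y, ∑ z, Real.negMulLog (q x y z) := by
    unfold entropy
    rw [Fintype.sum_prod_type]
    refine Finset.sum_congr rfl fun x _ => ?_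
    rw [Fintype.sum_prod_type]
    refine Finset.sum_congr rfl fun y _ => Finset.sum_congr rfl fun z _ => ?_
    rw [PXYZ]
  have HXZ : entropy μ (fun ω => (X ω, Z ω)) = ∑ x, ∑ z, Real.negMulLog (a x z) := by
    unfold entropy
    rw [Fintype.sum_prod_type]
    exact Finset.sum_congr rfl fun x _ => Finset.sum_congr rfl fun z _ => by rw [ha]
  have HYZ : entropy μ (fun ω => (Y ω, Z ω)) = ∑ y, ∑ z, Real.negMulLog (b y z) := by
    unfold entropy
    rw [Fintype.sum_prod_type]
    exact Finset.sum_congr rfl fun y _ => Finset.sum_congr rfl fun z _ => by rw [hb]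
  have HZ : entropy μ Z = ∑ z, Real.negMulLog (r z) := by
    unfold entropy
    exact Finset.sum_congr rfl fun z _ => by rw [hr]
  have EXZ : entropy μ (fun ω => (X ω, Z ω))
      = ∑ z, ∑ x, ∑ y, -(q x y z * Real.log (a x z)) := by
    rw [HXZ, Finset.sum_comm]
    refine Finset.sum_congr rfl fun z _ => Finset.sum_congr rfl fun x _ => ?_
    rw [Finset.sum_neg_distrib, ← Finset.sum_mul]
    simp [Real.negMulLog, neg_mul]
    exact Or.inl rfl
  have EYZ : entropy μ (fun ω => (Y ω, Z ω))
      = ∑ z, ∑ x, ∑ y, -(q x y z * Real.log (b y z)) := by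
    rw [HYZ, Finset.sum_comm]
    refine Finset.sum_congr rfl fun z _ => ?_
    rw [Finset.sum_comm]
    refine Finset.sum_congr rfl fun y _ => ?_
    rw [Finset.sum_neg_distrib, ← Finset.sum_mul]
    simp [Real.negMulLog, neg_mul]
    exact Or.inl rfl
  have EXYZ : entropy μ (fun ω => (X ω, Y ω, Z ω))
      = ∑ z, ∑ x, ∑ y, -(q x y z * Real.log (q x y z)) := by
    rw [HXYZ]
    rw [show (∑ x, ∑ y, ∑ z, Real.negMulLog (q x y z))
        = ∑ x, ∑ z, ∑ y, Real.negMulLog (q x y z) from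
      Finset.sum_congr rfl fun x _ => by rw [Finset.sum_comm]]
    rw [Finset.sum_comm]
    refine Finset.sum_congr rfl fun z _ => Finset.sum_congr rfl fun x _ =>
      Finset.sum_congr rfl fun y _ => ?_
    simp [Real.negMulLog, neg_mul]
  have EZ : entropy μ Z = ∑ z, ∑ x, ∑ y, -(q x y z * Real.log (r z)) := by
    rw [HZ]
    refine Finset.sum_congr rfl fun z _ => ?_
    rw [show (∑ x, ∑ y, -(q x y z * Real.log (r z)))
        = -((∑ x, ∑ y, q x y z) * Real.log (r z)) from by
      rw [Finset.sum_mul]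
      rw [← Finset.sum_neg_distrib]
      exact Finset.sum_congr rfl fun x _ => by
        rw [Finset.sum_neg_distrib, ← Finset.sum_mul]]
    simp [Real.negMulLog, neg_mul]
    exact Or.inl rfl
  have CMI : condMutualInfo μ X Y Z
      = ∑ z, ∑ x, ∑ y, (-(q x y z * Real.log (a x z)) + -(q x y z * Real.log (b y z))
          - -(q x y z * Real.log (q x y z)) - -(q x y z * Real.log (r z))) := by
    rw [condMutualInfo, EXZ, EYZ, EXYZ, EZ]
    simp only [← Finset.sum_add_distrib, ← Finset.sum_sub_distrib]
  rw [CMI]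
  have hqa : ∀ x y z, q x y z ≤ a x z := fun x y z =>
    Finset.single_le_sum (fun y' _ => hq0 x y' z) (Finset.mem_univ y)
  have hqb : ∀ x y z, q x y z ≤ b y z := fun x y z =>
    Finset.single_le_sum (fun x' _ => hq0 x' y z) (Finset.mem_univ x)
  have ha0 : ∀ x z, 0 ≤ a x z := fun x z => Finset.sum_nonneg fun y _ => hq0 x y z
  have har : ∀ x z, a x z ≤ r z := fun x z =>
    Finset.single_le_sum (fun x' _ => ha0 x' z) (Finset.mem_univ x)
  have hqr : ∀ x y z, q x y z ≤ r z := fun x y z => le_trans (hqa x y z) (har x z)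
  refine Finset.sum_nonneg fun z _ => ?_
  have step1 : ∑ x, ∑ y, (q x y z - a x z * b y z / r z)
      ≤ ∑ x, ∑ y, (-(q x y z * Real.log (a x z)) + -(q x y z * Real.log (b y z))
          - -(q x y z * Real.log (q x y z)) - -(q x y z * Real.log (r z))) := by
    refine Finset.sum_le_sum fun x _ => Finset.sum_le_sum fun y _ => ?_
    have := key_ineq (hq0 x y z) (hqa x y z) (hqb x y z) (hqr x y z)
    linarith
  have step2 : (0:ℝ) ≤ ∑ x, ∑ y, (q x y z - a x z * b y z / r z) := by
    have hsum : ∑ x, ∑ y, (a x z * b y z / r z) = r z * r z / r z := by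
      simp only [div_eq_mul_inv]
      rw [show (∑ x, ∑ y, a x z * b y z * (r z)⁻¹)
          = (∑ x, ∑ y, a x z * b y z) * (r z)⁻¹ from by
        rw [Finset.sum_mul]
        exact Finset.sum_congr rfl fun x _ => by rw [Finset.sum_mul]]
      rw [← Finset.sum_mul_sum]
      have h1 : (∑ x, a x z) = r z := rfl
      have h2 : (∑ y, b y z) = r z := by
        show (∑ y, ∑ x, q x y z) = ∑ x, ∑ y, q x y z
        rw [Finset.sum_comm]
      rw [h1, h2]
    have hr0 : 0 ≤ r z := Finset.sum_nonneg fun x _ => Finset.sum_nonneg fun y _ => hq0 x y z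
    have hle : r z * r z / r z ≤ r z := by
      rcases eq_or_lt_of_le hr0 with h | h
      · rw [← h]; simp
      · rw [mul_div_assoc, div_self h.ne', mul_one]
    simp only [Finset.sum_sub_distrib]
    rw [hsum]
    have h3 : (∑ x, ∑ y, q x y z) = r z := rfl
    rw [h3]
    linarith
  linarith

section Chains
variable {Ω : Type*} [MeasurableSpace Ω] (μ : Measure Ω)
variable {SX SY SZ SC : Type*} [Fintype SX] [Fintype SY] [Fintype SZ] [Fintype SC]
variable (X : Ω → SX) (Y : Ω → SY) (Z : Ω → SZ) (C : Ω → SC)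

lemma cmi_chain :
    condMutualInfo μ (fun ω => (X ω, Y ω)) Z C
      = condMutualInfo μ X Z C + condMutualInfo μ Y Z (fun ω => (X ω, C ω)) := by
  have e1 : entropy μ (fun ω => (Y ω, (X ω, C ω)))
      = entropy μ (fun ω => ((X ω, Y ω), C ω)) :=
    entropy_comp μ (fun ω => ((X ω, Y ω), C ω))
      (fun p => (p.1.2, (p.1.1, p.2)))
      (fun p p' h => by
        simp only [Prod.mk.injEq] at h
        obtain ⟨h1, h2, h3⟩ := h
        exact Prod.ext (Prod.ext h2 h1) h3)
  have e2 : entropy μ (fun ω => (Z ω, (X ω, C ω)))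
      = entropy μ (fun ω => (X ω, (Z ω, C ω))) :=
    entropy_comp μ (fun ω => (X ω, (Z ω, C ω)))
      (fun p => (p.2.1, (p.1, p.2.2)))
      (fun p p' h => by
        simp only [Prod.mk.injEq] at h
        obtain ⟨h1, h2, h3⟩ := h
        exact Prod.ext h2 (Prod.ext h1 h3))
  have e3 : entropy μ (fun ω => (Y ω, Z ω, (X ω, C ω)))
      = entropy μ (fun ω => ((X ω, Y ω), Z ω, C ω)) :=
    entropy_comp μ (fun ω => ((X ω, Y ω), Z ω, C ω))
      (fun p => (p.1.2, (p.2.1, (p.1.1, p.2.2))))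
      (fun p p' h => by
        simp only [Prod.mk.injEq] at h
        obtain ⟨h1, h2, h3, h4⟩ := h
        exact Prod.ext (Prod.ext h3 h1) (Prod.ext h2 h4))
  simp only [condMutualInfo]
  rw [e1, e2, e3]
  ring

lemma mi_chain :
    mutualInfo μ (fun ω => (X ω, C ω)) Z
      = mutualInfo μ C Z + condMutualInfo μ X Z C := by
  have e1 : entropy μ (fun ω => (C ω, Z ω)) = entropy μ (fun ω => (Z ω, C ω)) :=
    entropy_comp μ (fun ω => (Z ω, C ω)) (fun p => (p.2, p.1))
      (fun p p' h => by
        simp only [Prod.mk.injEq] at h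
        exact Prod.ext h.2 h.1)
  have e2 : entropy μ (fun ω => (X ω, (Z ω, C ω)))
      = entropy μ (fun ω => ((X ω, C ω), Z ω)) :=
    entropy_comp μ (fun ω => ((X ω, C ω), Z ω))
      (fun p => (p.1.1, (p.2, p.1.2)))
      (fun p p' h => by
        simp only [Prod.mk.injEq] at h
        obtain ⟨h1, h2, h3⟩ := h
        exact Prod.ext (Prod.ext h1 h3) h2)
  simp only [mutualInfo, condMutualInfo]
  rw [e1, e2]
  ring

lemma cmi_comp₁ {SX' : Type*} [Fintype SX'] (f : SX → SX') (hf : Function.Injective f) :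
    condMutualInfo μ (fun ω => f (X ω)) Z C = condMutualInfo μ X Z C := by
  have e1 : entropy μ (fun ω => (f (X ω), C ω)) = entropy μ (fun ω => (X ω, C ω)) :=
    entropy_comp μ (fun ω => (X ω, C ω)) (fun p => (f p.1, p.2))
      (fun p p' h => by
        simp only [Prod.mk.injEq] at h
        exact Prod.ext (hf h.1) h.2)
  have e2 : entropy μ (fun ω => (f (X ω), Z ω, C ω))
      = entropy μ (fun ω => (X ω, Z ω, C ω)) :=
    entropy_comp μ (fun ω => (X ω, Z ω, C ω)) (fun p => (f p.1, p.2))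
      (fun p p' h => by
        simp only [Prod.mk.injEq] at h
        exact Prod.ext (hf h.1) h.2)
  simp only [condMutualInfo]
  rw [e1, e2]

lemma cmi_comp₃ {SC' : Type*} [Fintype SC'] (f : SC → SC') (hf : Function.Injective f) :
    condMutualInfo μ X Z (fun ω => f (C ω)) = condMutualInfo μ X Z C := by
  have e1 : entropy μ (fun ω => (X ω, f (C ω))) = entropy μ (fun ω => (X ω, C ω)) :=
    entropy_comp μ (fun ω => (X ω, C ω)) (fun p => (p.1, f p.2))
      (fun p p' h => by
        simp only [Prod.mk.injEq] at h
        exact Prod.ext h.1 (hf h.2))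
  have e2 : entropy μ (fun ω => (Z ω, f (C ω))) = entropy μ (fun ω => (Z ω, C ω)) :=
    entropy_comp μ (fun ω => (Z ω, C ω)) (fun p => (p.1, f p.2))
      (fun p p' h => by
        simp only [Prod.mk.injEq] at h
        exact Prod.ext h.1 (hf h.2))
  have e3 : entropy μ (fun ω => f (C ω)) = entropy μ C := entropy_comp μ C f hf
  have e4 : entropy μ (fun ω => (X ω, Z ω, f (C ω)))
      = entropy μ (fun ω => (X ω, Z ω, C ω)) :=
    entropy_comp μ (fun ω => (X ω, Z ω, C ω)) (fun p => (p.1, p.2.1, f p.2.2))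
      (fun p p' h => by
        simp only [Prod.mk.injEq] at h
        obtain ⟨h1, h2, h3⟩ := h
        exact Prod.ext h1 (Prod.ext h2 (hf h3)))
  simp only [condMutualInfo]
  rw [e1, e2, e3, e4]

lemma mi_comp₁ {SX' : Type*} [Fintype SX'] (f : SX → SX') (hf : Function.Injective f) :
    mutualInfo μ (fun ω => f (X ω)) Z = mutualInfo μ X Z := by
  have e1 : entropy μ (fun ω => f (X ω)) = entropy μ X := entropy_comp μ X f hf
  have e2 : entropy μ (fun ω => (f (X ω), Z ω)) = entropy μ (fun ω => (X ω, Z ω)) :=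
    entropy_comp μ (fun ω => (X ω, Z ω)) (fun p => (f p.1, p.2))
      (fun p p' h => by
        simp only [Prod.mk.injEq] at h
        exact Prod.ext (hf h.1) h.2)
  simp only [mutualInfo]
  rw [e1, e2]

lemma cmi_key {SD : Type*} [Fintype SD] (D : Ω → SD) :
    condMutualInfo μ X Z C
      = condMutualInfo μ D Z C + condMutualInfo μ X Z (fun ω => (D ω, C ω))
        - condMutualInfo μ D Z (fun ω => (X ω, C ω)) := by
  have h1 := cmi_chain μ X D Z C
  have h2 := cmi_chain μ D X Z C
  have h3 : condMutualInfo μ (fun ω => (X ω, D ω)) Z C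
      = condMutualInfo μ (fun ω => (D ω, X ω)) Z C := by
    have := cmi_comp₁ μ (fun ω => (D ω, X ω)) Z C (fun p => (p.2, p.1))
      (fun p p' h => by
        simp only [Prod.mk.injEq] at h
        exact Prod.ext h.2 h.1)
    exact this
  linarith

lemma mutualInfo_nonneg' [IsProbabilityMeasure μ]
    [MeasurableSpace SX] [MeasurableSingletonClass SX]
    [MeasurableSpace SZ] [MeasurableSingletonClass SZ]
    (hX : Measurable X) (hZ : Measurable Z) :
    0 ≤ mutualInfo μ X Z := by
  have e0 : entropy μ (fun _ : Ω => ()) = 0 := by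
    unfold entropy
    have hu : ((fun _ : Ω => ()) ⁻¹' {()}) = Set.univ := by ext ω; simp
    simp [hu, Real.negMulLog]
  have e1 : entropy μ (fun ω => (X ω, ())) = entropy μ X :=
    entropy_comp μ X (fun x => (x, ())) (fun p p' h => by
      simpa using congrArg Prod.fst h)
  have e1' : entropy μ (fun ω => (Z ω, ())) = entropy μ Z :=
    entropy_comp μ Z (fun x => (x, ())) (fun p p' h => by
      simpa using congrArg Prod.fst h)
  have e2 : entropy μ (fun ω => (X ω, Z ω, ())) = entropy μ (fun ω => (X ω, Z ω)) :=
    entropy_comp μ (fun ω => (X ω, Z ω)) (fun p => (p.1, p.2, ()))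
      (fun p p' h => by
        simp only [Prod.mk.injEq] at h
        exact Prod.ext h.1 h.2.1)
  have heq : mutualInfo μ X Z = condMutualInfo μ X Z (fun _ : Ω => ()) := by
    simp only [mutualInfo, condMutualInfo]
    rw [e0, e1, e1', e2]
    ring
  rw [heq]
  exact condMutualInfo_nonneg μ X Z _ hX hZ

end Chains

end Aux

theorem stmt_5
    {Ω : Type*} [MeasurableSpace Ω] (μ : Measure Ω) [IsProbabilityMeasure μ]
    {SU SV SW₁ SW₂ SY₁ SY₂ : Type*}
    [Fintype SU] [MeasurableSpace SU] [MeasurableSingletonClass SU] [Fintype SV] [MeasurableSpace SV] [MeasurableSingletonClass SV] [Fintype SW₁] [MeasurableSpace SW₁] [MeasurableSingletonClass SW₁] [Fintype SW₂] [MeasurableSpace SW₂] [MeasurableSingletonClass SW₂] [Fintype SY₁] [MeasurableSpace SY₁] [MeasurableSingletonClass SY₁] [Fintype SY₂] [MeasurableSpace SY₂] [MeasurableSingletonClass SY₂]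
    (U : Ω → SU) (V : Ω → SV) (W₁ : Ω → SW₁) (W₂ : Ω → SW₂) (Y₁ : Ω → SY₁) (Y₂ : Ω → SY₂)
    (hU : Measurable U) (hV : Measurable V) (hW₁ : Measurable W₁) (hW₂ : Measurable W₂) (hY₁ : Measurable Y₁) (hY₂ : Measurable Y₂)
    (R₁ R₂ : ℝ)
    (h0 : condMutualInfo μ U Y₁ W₁ = condMutualInfo μ U Y₁ (fun ω => (V ω, W₁ ω)))
    (h1 : condMutualInfo μ V Y₂ W₂ = condMutualInfo μ V Y₂ (fun ω => (U ω, W₂ ω)))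
    (h2 : condMutualInfo μ U V (fun ω => (W₁ ω, W₂ ω, Y₁ ω)) = condMutualInfo μ U V (fun ω => (W₁ ω, W₂ ω, Y₂ ω)))
    (h3 : condMutualInfo μ W₂ Y₁ W₁ = condMutualInfo μ W₁ Y₂ W₂)
    (h4 : condMutualInfo μ W₂ Y₁ (fun ω => (U ω, W₁ ω)) = condMutualInfo μ W₁ Y₂ (fun ω => (U ω, W₂ ω)))
    (h5 : condMutualInfo μ W₂ Y₁ (fun ω => (V ω, W₁ ω)) = condMutualInfo μ W₁ Y₂ (fun ω => (V ω, W₂ ω)))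
    (h6 : condMutualInfo μ W₂ Y₁ (fun ω => (U ω, V ω, W₁ ω)) = condMutualInfo μ W₁ Y₂ (fun ω => (U ω, V ω, W₂ ω)))
    (h7 : R₁ ≤ condMutualInfo μ U Y₁ W₁)
    (h8 : R₂ ≤ condMutualInfo μ V Y₂ W₂)
    : R₁ ≤ mutualInfo μ (fun ω => (U ω, W₁ ω, W₂ ω)) Y₁ ∧ R₂ ≤ mutualInfo μ (fun ω => (V ω, W₁ ω, W₂ ω)) Y₂ ∧ R₁ + R₂ ≤ min (mutualInfo μ (fun ω => (W₁ ω, W₂ ω)) Y₁) (mutualInfo μ (fun ω => (W₁ ω, W₂ ω)) Y₂) + condMutualInfo μ U Y₁ (fun ω => (W₁ ω, W₂ ω)) + condMutualInfo μ V Y₂ (fun ω => (U ω, W₁ ω, W₂ ω)) ∧ R₁ + R₂ ≤ min (mutualInfo μ (fun ω => (W₁ ω, W₂ ω)) Y₁) (mutualInfo μ (fun ω => (W₁ ω, W₂ ω)) Y₂) + condMutualInfo μ U Y₁ (fun ω => (V ω, W₁ ω, W₂ ω)) + condMutualInfo μ V Y₂ (fun ω => (W₁ ω, W₂ ω)) :=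 by
  classical
  -- abbreviation facts
  set W : Ω → SW₁ × SW₂ := fun ω => (W₁ ω, W₂ ω) with hW_def
  -- chain-rule decompositions via cmi_key
  have KEY1 : condMutualInfo μ U Y₁ W₁
      = condMutualInfo μ W₂ Y₁ W₁ + condMutualInfo μ U Y₁ (fun ω => (W₂ ω, W₁ ω))
        - condMutualInfo μ W₂ Y₁ (fun ω => (U ω, W₁ ω)) := cmi_key μ U Y₁ W₁ W₂
  have RG1 : condMutualInfo μ U Y₁ (fun ω => (W₂ ω, W₁ ω))
      = condMutualInfo μ U Y₁ (fun ω => (W₁ ω, W₂ ω)) := by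
    exact cmi_comp₃ μ U Y₁ (fun ω => (W₁ ω, W₂ ω)) (fun p => (p.2, p.1))
      (fun p p' h => by
        simp only [Prod.mk.injEq] at h
        exact Prod.ext h.2 h.1)
  have KEY2 : condMutualInfo μ V Y₂ W₂
      = condMutualInfo μ W₁ Y₂ W₂ + condMutualInfo μ V Y₂ (fun ω => (W₁ ω, W₂ ω))
        - condMutualInfo μ W₁ Y₂ (fun ω => (V ω, W₂ ω)) := cmi_key μ V Y₂ W₂ W₁
  have KEY3 : condMutualInfo μ V Y₂ (fun ω => (U ω, W₂ ω))
      = condMutualInfo μ W₁ Y₂ (fun ω => (U ω, W₂ ω))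
        + condMutualInfo μ V Y₂ (fun ω => (W₁ ω, (U ω, W₂ ω)))
        - condMutualInfo μ W₁ Y₂ (fun ω => (V ω, (U ω, W₂ ω))) :=
    cmi_key μ V Y₂ (fun ω => (U ω, W₂ ω)) W₁
  have RG3a : condMutualInfo μ V Y₂ (fun ω => (W₁ ω, (U ω, W₂ ω)))
      = condMutualInfo μ V Y₂ (fun ω => (U ω, W₁ ω, W₂ ω)) := by
    exact cmi_comp₃ μ V Y₂ (fun ω => (U ω, W₁ ω, W₂ ω))
      (fun p => (p.2.1, (p.1, p.2.2)))
      (fun p p' h => by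
        simp only [Prod.mk.injEq] at h
        obtain ⟨h1, h2, h3⟩ := h
        exact Prod.ext h2 (Prod.ext h1 h3))
  have RG3b : condMutualInfo μ W₁ Y₂ (fun ω => (V ω, (U ω, W₂ ω)))
      = condMutualInfo μ W₁ Y₂ (fun ω => (U ω, V ω, W₂ ω)) := by
    exact cmi_comp₃ μ W₁ Y₂ (fun ω => (U ω, V ω, W₂ ω))
      (fun p => (p.2.1, (p.1, p.2.2)))
      (fun p p' h => by
        simp only [Prod.mk.injEq] at h
        obtain ⟨h1, h2, h3⟩ := h
        exact Prod.ext h2 (Prod.ext h1 h3))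
  have KEY4 : condMutualInfo μ U Y₁ (fun ω => (V ω, W₁ ω))
      = condMutualInfo μ W₂ Y₁ (fun ω => (V ω, W₁ ω))
        + condMutualInfo μ U Y₁ (fun ω => (W₂ ω, (V ω, W₁ ω)))
        - condMutualInfo μ W₂ Y₁ (fun ω => (U ω, (V ω, W₁ ω))) :=
    cmi_key μ U Y₁ (fun ω => (V ω, W₁ ω)) W₂
  have RG4 : condMutualInfo μ U Y₁ (fun ω => (W₂ ω, (V ω, W₁ ω)))
      = condMutualInfo μ U Y₁ (fun ω => (V ω, W₁ ω, W₂ ω)) := by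
    exact cmi_comp₃ μ U Y₁ (fun ω => (V ω, W₁ ω, W₂ ω))
      (fun p => (p.2.2, (p.1, p.2.1)))
      (fun p p' h => by
        simp only [Prod.mk.injEq] at h
        obtain ⟨h1, h2, h3⟩ := h
        exact Prod.ext h2 (Prod.ext h3 h1))
  -- mutual information chains
  have M1 : mutualInfo μ (fun ω => (W₂ ω, W₁ ω)) Y₁
      = mutualInfo μ W₁ Y₁ + condMutualInfo μ W₂ Y₁ W₁ := mi_chain μ W₂ Y₁ W₁
  have MS1 : mutualInfo μ (fun ω => (W₂ ω, W₁ ω)) Y₁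
      = mutualInfo μ (fun ω => (W₁ ω, W₂ ω)) Y₁ := by
    exact mi_comp₁ μ (fun ω => (W₁ ω, W₂ ω)) Y₁ (fun p => (p.2, p.1))
      (fun p p' h => by
        simp only [Prod.mk.injEq] at h
        exact Prod.ext h.2 h.1)
  have M2 : mutualInfo μ (fun ω => (W₁ ω, W₂ ω)) Y₂
      = mutualInfo μ W₂ Y₂ + condMutualInfo μ W₁ Y₂ W₂ := mi_chain μ W₁ Y₂ W₂
  have M3 : mutualInfo μ (fun ω => (U ω, W₁ ω, W₂ ω)) Y₁
      = mutualInfo μ (fun ω => (W₁ ω, W₂ ω)) Y₁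
        + condMutualInfo μ U Y₁ (fun ω => (W₁ ω, W₂ ω)) :=
    mi_chain μ U Y₁ (fun ω => (W₁ ω, W₂ ω))
  have M4 : mutualInfo μ (fun ω => (V ω, W₁ ω, W₂ ω)) Y₂
      = mutualInfo μ (fun ω => (W₁ ω, W₂ ω)) Y₂
        + condMutualInfo μ V Y₂ (fun ω => (W₁ ω, W₂ ω)) :=
    mi_chain μ V Y₂ (fun ω => (W₁ ω, W₂ ω))
  -- nonnegativity facts
  have n1 : 0 ≤ condMutualInfo μ W₂ Y₁ (fun ω => (U ω, W₁ ω)) :=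
    condMutualInfo_nonneg μ _ _ _ hW₂ hY₁
  have n2 : 0 ≤ mutualInfo μ W₁ Y₁ := mutualInfo_nonneg' μ W₁ Y₁ hW₁ hY₁
  have n3 : 0 ≤ condMutualInfo μ W₁ Y₂ (fun ω => (V ω, W₂ ω)) :=
    condMutualInfo_nonneg μ _ _ _ hW₁ hY₂
  have n4 : 0 ≤ mutualInfo μ W₂ Y₂ := mutualInfo_nonneg' μ W₂ Y₂ hW₂ hY₂
  have n5 : 0 ≤ condMutualInfo μ W₁ Y₂ (fun ω => (U ω, V ω, W₂ ω)) :=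
    condMutualInfo_nonneg μ _ _ _ hW₁ hY₂
  have n6 : 0 ≤ condMutualInfo μ W₂ Y₁ (fun ω => (U ω, (V ω, W₁ ω))) :=
    condMutualInfo_nonneg μ _ _ _ hW₂ hY₁
  -- the common bound on K = I(W₂;Y₁|W₁)
  have kmin1 : condMutualInfo μ W₂ Y₁ W₁ ≤ mutualInfo μ (fun ω => (W₁ ω, W₂ ω)) Y₁ := by
    linarith [M1, MS1, n2]
  have kmin2 : condMutualInfo μ W₂ Y₁ W₁ ≤ mutualInfo μ (fun ω => (W₁ ω, W₂ ω)) Y₂ := by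
    linarith [M2, n4, h3]
  have kmin : condMutualInfo μ W₂ Y₁ W₁
      ≤ min (mutualInfo μ (fun ω => (W₁ ω, W₂ ω)) Y₁)
          (mutualInfo μ (fun ω => (W₁ ω, W₂ ω)) Y₂) := le_min kmin1 kmin2
  refine ⟨?_, ?_, ?_, ?_⟩
  · linarith [M3, KEY1, RG1, M1, MS1, n1, n2, h7]
  · linarith [M4, KEY2, M2, n3, n4, h8]
  · linarith [h7, KEY1, RG1, h8, h1, KEY3, RG3a, RG3b, h4, n5, kmin]
  · linarith [h8, KEY2, h3, h7, h0, KEY4, RG4, h5, n6, kmin]
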